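/- Let P be a population protocol with a single input variable x that computes the predicate x ≥ η for some η ≥ 2. Then there exists a sequence C_2, C_3, C_4, ... of configurations belonging to the set S of stable configurations such that (1) IC(i) →* C_i for every i ≥ 2, and (2) C_i + j·I(x) →* C_{i+j} for every i ≥ 2 and every j ≥ 0. -/

import Mathlib

/-- A population protocol `(Q, T, L, X, I, O)`: `T` is a finite set of transitions, each a pair
of size-2 multisets over the states `Q`, such that every size-2 multiset is the left-hand side
of some transition; `L` is the leader multiset, `I` the input mapping and `O` the output
mapping. -/
structure PopulationProtocol (Q X : Type) where
  T : Finset (Multiset Q × Multiset Q)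
  pre_card : ∀ t ∈ T, Multiset.card t.1 = 2
  post_card : ∀ t ∈ T, Multiset.card t.2 = 2
  total : ∀ p q : Q, ∃ t ∈ T, t.1 = {p, q}
  L : Multiset Q
  I : X → Q
  O : Q → Bool

namespace PopulationProtocol

variable {Q X : Type} [DecidableEq Q]

/-- A configuration is a multiset of states with at least two elements. -/
def IsConfig (C : Multiset Q) : Prop := 2 ≤ Multiset.card C

/-- One step: some transition `t` enabled at `C` (i.e. `t.1 ≤ C`) fires. -/
def Step (P : PopulationProtocol Q X) (C C' : Multiset Q) : Prop :=
  ∃ t ∈ P.T, t.1 ≤ C ∧ C' = C - t.1 + t.2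

/-- Reachability `C →* C'` via a finite sequence of transitions. -/
def Reach (P : PopulationProtocol Q X) : Multiset Q → Multiset Q → Prop :=
  Relation.ReflTransGen P.Step

/-- Firing a given transition `t`. -/
def StepT (P : PopulationProtocol Q X) (t : Multiset Q × Multiset Q)
    (C C' : Multiset Q) : Prop :=
  t ∈ P.T ∧ t.1 ≤ C ∧ C' = C - t.1 + t.2

/-- `C →σ C'`: successive firing of the transitions in the finite sequence `σ`. -/
def FireSeq (P : PopulationProtocol Q X) :
    List (Multiset Q × Multiset Q) → Multiset Q → Multiset Q → Prop
  | [], C, C' => C' = C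
  | t :: σ, C, C' => ∃ D, P.StepT t C D ∧ P.FireSeq σ D C'

/-- The output of a configuration is `b` if all states populated by it have output `b`. -/
def Output (P : PopulationProtocol Q X) (C : Multiset Q) (b : Bool) : Prop :=
  ∀ q ∈ C, P.O q = b

/-- A configuration is `b`-stable if every configuration reachable from it has output `b`. -/
def Stable (P : PopulationProtocol Q X) (b : Bool) (C : Multiset Q) : Prop :=
  IsConfig C ∧ ∀ C', P.Reach C C' → P.Output C' b

/-- The set `S = S₀ ∪ S₁` of stable configurations. -/
def StableSet (P : PopulationProtocol Q X) (C : Multiset Q) : Prop :=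
  P.Stable false C ∨ P.Stable true C

/-- The initial configuration `IC(v) = L + Σ_x v(x)·I(x)` for an input `v`. -/
def IC [Fintype X] (P : PopulationProtocol Q X) (v : X → ℕ) : Multiset Q :=
  P.L + ∑ x : X, Multiset.replicate (v x) (P.I x)

/-- An execution: an infinite sequence of configurations, each step firing a transition. -/
def IsExecution (P : PopulationProtocol Q X) (σ : ℕ → Multiset Q) : Prop :=
  ∀ i, P.Step (σ i) (σ (i + 1))

/-- Fairness: a configuration reachable from infinitely many `σ i` occurs infinitely often. -/
def Fair (P : PopulationProtocol Q X) (σ : ℕ → Multiset Q) : Prop :=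
  ∀ C : Multiset Q, (∀ N, ∃ i, N ≤ i ∧ P.Reach (σ i) C) → ∀ N, ∃ i, N ≤ i ∧ σ i = C

/-- The output of an execution is `b` if from some index on every configuration has output `b`. -/
def OutputOf (P : PopulationProtocol Q X) (σ : ℕ → Multiset Q) (b : Bool) : Prop :=
  ∃ N, ∀ i, N ≤ i → P.Output (σ i) b

/-- The protocol computes `φ` if for every input `v` (of size at least 2) every fair execution
from `IC(v)` has output `φ(v)`. -/
def Computes [Fintype X] (P : PopulationProtocol Q X) (φ : (X → ℕ) → Bool) : Prop :=
  ∀ v : X → ℕ, 2 ≤ ∑ x : X, v x →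
    ∀ σ : ℕ → Multiset Q, P.IsExecution σ → P.Fair σ → σ 0 = P.IC v → P.OutputOf σ (φ v)

/-- `(B, S)` is a basis element of a set `𝒞` of configurations if `B + ℕ^S ⊆ 𝒞`. -/
def IsBasisElement (𝒞 : Multiset Q → Prop) (B : Multiset Q) (S : Finset Q) : Prop :=
  ∀ D : Multiset Q, (∀ q ∈ D, q ∈ S) → 𝒞 (B + D)

/-- A (finite) basis of a set `𝒞` of configurations: `𝒞 = ⋃_{(B,S)∈ℬ} (B + ℕ^S)`. -/
def IsBasis (𝒞 : Multiset Q → Prop) (ℬ : Finset (Multiset Q × Finset Q)) : Prop :=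
  ∀ C : Multiset Q, 𝒞 C ↔ ∃ p ∈ ℬ, ∃ D : Multiset Q, (∀ q ∈ D, q ∈ p.2) ∧ C = p.1 + D

/-- `‖B‖∞`, the maximal multiplicity of a state in `B`. -/
def normInf [Fintype Q] (B : Multiset Q) : ℕ := Finset.univ.sup fun q => B.count q

/-- The displacement `Δ(t) = p' + q' − p − q ∈ ℤ^Q` of a transition `t = (p,q ↦ p',q')`. -/
def displ (t : Multiset Q × Multiset Q) (q : Q) : ℤ :=
  (Multiset.count q t.2 : ℤ) - (Multiset.count q t.1 : ℤ)

/-- The displacement of a multiset `π` of transitions. -/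
def displM (π : Multiset (Multiset Q × Multiset Q)) (q : Q) : ℤ :=
  (π.map fun t => displ t q).sum

/-- `C' = C + Δ(π)` (as vectors in `ℤ^Q`). -/
def AddDispl (C : Multiset Q) (π : Multiset (Multiset Q × Multiset Q))
    (C' : Multiset Q) : Prop :=
  ∀ q : Q, (Multiset.count q C' : ℤ) = (Multiset.count q C : ℤ) + displM π q

/-- A multiset `π ∈ ℕ^T` of transitions is potentially realisable if `IC(i) + Δ(π) ∈ ℕ^Q`
for some input `i`. (Leaderless, single input variable.) -/
def PotReal (P : PopulationProtocol Q Unit)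
    (π : Multiset (Multiset Q × Multiset Q)) : Prop :=
  (∀ t ∈ π, t ∈ P.T) ∧ ∃ i : ℕ, ∃ C : Multiset Q, AddDispl (P.IC fun _ => i) π C

/-- A configuration is `j`-saturated if every state is populated by at least `j` agents. -/
def Saturated (j : ℕ) (C : Multiset Q) : Prop := ∀ q : Q, j ≤ Multiset.count q C

/-- `C` is `(1/k)`-concentrated in `S`: `k·C(Q∖S) ≤ |C|`. -/
def ConcInv (k : ℕ) (S : Finset Q) (C : Multiset Q) : Prop :=
  k * Multiset.card (C.filter fun q => q ∉ S) ≤ Multiset.card C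

end PopulationProtocol

open PopulationProtocol
namespace PPAux

open PopulationProtocol

variable {Q : Type} [DecidableEq Q]

lemma card_step (P : PopulationProtocol Q Unit) {C C' : Multiset Q} (h : P.Step C C') :
    Multiset.card C' = Multiset.card C := by
  obtain ⟨t, ht, hle, rfl⟩ := h
  have h1 := P.pre_card t ht
  have h2 := P.post_card t ht
  have h3 : Multiset.card t.1 ≤ Multiset.card C := Multiset.card_le_card hle
  rw [Multiset.card_add, Multiset.card_sub hle]
  omega

lemma card_reach (P : PopulationProtocol Q Unit) {C C' : Multiset Q} (h : P.Reach C C') :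
    Multiset.card C' = Multiset.card C := by
  induction h with
  | refl => rfl
  | tail _ hstep ih => rw [card_step P hstep, ih]

lemma step_mono (P : PopulationProtocol Q Unit) {C C' : Multiset Q} (E : Multiset Q)
    (h : P.Step C C') : P.Step (C + E) (C' + E) := by
  obtain ⟨t, ht, hle, rfl⟩ := h
  refine ⟨t, ht, le_trans hle (Multiset.le_add_right _ _), ?_⟩
  ext q
  have hc := Multiset.le_iff_count.mp hle q
  simp only [Multiset.count_add, Multiset.count_sub]
  omega

lemma reach_mono (P : PopulationProtocol Q Unit) {C C' : Multiset Q} (E : Multiset Q)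
    (h : P.Reach C C') : P.Reach (C + E) (C' + E) := by
  induction h with
  | refl => exact Relation.ReflTransGen.refl
  | tail _ hstep ih => exact ih.tail (step_mono P E hstep)

lemma exists_step (P : PopulationProtocol Q Unit) {C : Multiset Q} (h : 2 ≤ Multiset.card C) :
    ∃ C', P.Step C C' := by
  have hpos : 0 < Multiset.card C := by omega
  obtain ⟨p, hp⟩ := Multiset.card_pos_iff_exists_mem.mp hpos
  obtain ⟨C1, rfl⟩ := Multiset.exists_cons_of_mem hp
  have h1 : 0 < Multiset.card C1 := by
    rw [Multiset.card_cons] at h; omega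
  obtain ⟨q, hq⟩ := Multiset.card_pos_iff_exists_mem.mp h1
  obtain ⟨C2, rfl⟩ := Multiset.exists_cons_of_mem hq
  obtain ⟨t, ht, hteq⟩ := P.total p q
  refine ⟨_, t, ht, ?_, rfl⟩
  rw [hteq]
  exact Multiset.cons_le_cons p (Multiset.cons_le_cons q (Multiset.zero_le C2))

lemma IC_eq (P : PopulationProtocol Q Unit) (i : ℕ) :
    (P.IC fun _ => i) = P.L + Multiset.replicate i (P.I ()) := by
  simp only [PopulationProtocol.IC]
  rw [Fintype.sum_unique]

lemma card_IC (P : PopulationProtocol Q Unit) (i : ℕ) :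
    Multiset.card (P.IC fun _ => i) = Multiset.card P.L + i := by
  rw [IC_eq]; simp

lemma IC_succ (P : PopulationProtocol Q Unit) (i : ℕ) :
    (P.IC fun _ => (i + 1)) = (P.IC fun _ => i) + Multiset.replicate 1 (P.I ()) := by
  rw [IC_eq, IC_eq, Multiset.replicate_add, add_assoc]

/-- chain from `a` along `l` ending at `b` -/
def ChainTo {α : Type*} (r : α → α → Prop) (a : α) (l : List α) (b : α) : Prop :=
  List.Chain r a l ∧ (a :: l).getLast (List.cons_ne_nil _ _) = b

lemma exists_chainTo {α : Type*} {r : α → α → Prop} {a b : α}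
    (h : Relation.ReflTransGen r a b) : ∃ l, ChainTo r a l b :=
  (List.exists_isChain_cons_of_relationReflTransGen h).imp fun _ hl => ⟨hl.1, hl.2⟩

lemma chainTo_trans {α : Type*} {r : α → α → Prop} {a b c : α} {l1 l2 : List α}
    (h1 : ChainTo r a l1 b) (h2 : ChainTo r b l2 c) : ChainTo r a (l1 ++ l2) c := by
  obtain ⟨hc1, hg1⟩ := h1
  obtain ⟨hc2, hg2⟩ := h2
  constructor
  · clear hg2
    induction l1 generalizing a with
    | nil =>
      simp only [List.getLast_singleton] at hg1
      subst hg1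
      simpa using hc2
    | cons x l ih =>
      rw [List.Chain, List.chain_cons] at hc1
      rw [List.cons_append, List.Chain, List.chain_cons]
      exact ⟨hc1.1, ih hc1.2 (by rwa [List.getLast_cons_cons] at hg1)⟩
  · rcases l2 with _ | ⟨x, l2'⟩
    · simp only [List.getLast_singleton] at hg2
      subst hg2
      simpa using hg1
    · have h3 : ((a :: l1) ++ (x :: l2')).getLast (by simp) = (x :: l2').getLast (by simp) :=
        List.getLast_append_of_ne_nil _ (by simp)
      rw [List.getLast_cons_cons] at hg2
      exact h3.trans hg2

lemma chain_reach (P : PopulationProtocol Q Unit) {C : Multiset Q} {l : List (Multiset Q)}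
    (h : List.Chain P.Step C l) : ∀ E ∈ l, P.Reach C E := by
  induction l generalizing C with
  | nil => simp
  | cons b l ih =>
    rw [List.Chain, List.chain_cons] at h
    intro E hE
    rcases List.mem_cons.mp hE with rfl | hE
    · exact Relation.ReflTransGen.single h.1
    · exact Relation.ReflTransGen.head h.1 (ih h.2 E hE)

lemma visit_chain (P : PopulationProtocol Q Unit) (C : Multiset Q) (ts : List (Multiset Q))
    (h : ∀ E ∈ ts, P.Reach C E ∧ P.Reach E C) :
    ∃ l, ChainTo P.Step C l C ∧ ∀ E ∈ ts, E ∈ (C :: l) := by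
  induction ts with
  | nil => exact ⟨[], ⟨List.Chain.nil, rfl⟩, by simp⟩
  | cons E ts ih =>
    obtain ⟨l3, hl3, hmem⟩ := ih fun F hF => h F (List.mem_cons_of_mem _ hF)
    obtain ⟨hCE, hEC⟩ := h E List.mem_cons_self
    obtain ⟨l1, hl1⟩ := exists_chainTo hCE
    obtain ⟨l2, hl2⟩ := exists_chainTo hEC
    refine ⟨l1 ++ (l2 ++ l3), chainTo_trans hl1 (chainTo_trans hl2 hl3), ?_⟩
    intro F hF
    rcases List.mem_cons.mp hF with rfl | hF
    · have hmem' : F ∈ C :: l1 := hl1.2 ▸ List.getLast_mem _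
      rcases List.mem_cons.mp hmem' with rfl | hF1
      · exact List.mem_cons_self
      · exact List.mem_cons_of_mem _ (List.mem_append_left _ hF1)
    · have := hmem F hF
      rcases List.mem_cons.mp this with rfl | hF3
      · exact List.mem_cons_self
      · exact List.mem_cons_of_mem _ (List.mem_append_right _ (List.mem_append_right _ hF3))

end PPAux
namespace PPAux

theorem reach_stable {Q : Type} [DecidableEq Q] (P : PopulationProtocol Q Unit)
    (η : ℕ) (hcomp : P.Computes fun v => decide (η ≤ v ())) (i₀ : ℕ) (hi : 2 ≤ i₀)
    (D : Multiset Q) (hD : P.Reach (P.IC fun _ => i₀) D) :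
    ∃ C, P.Reach D C ∧ P.StableSet C := by
  classical
  set IC0 := P.IC fun _ => i₀ with hIC0
  set n := Multiset.card IC0 with hn
  have hn2 : 2 ≤ n := by rw [hn, hIC0, card_IC]; omega
  set S : Finset Q := IC0.toFinset ∪ P.T.biUnion (fun t => t.2.toFinset) with hS
  set m : Multiset Q := n • S.val with hm
  have hsupp : ∀ E, P.Reach IC0 E → ∀ q ∈ E, q ∈ S := by
    intro E hE
    induction hE with
    | refl => intro q hq; exact Finset.mem_union_left _ (Multiset.mem_toFinset.mpr hq)
    | tail hr hstep ih =>
      intro q hq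
      obtain ⟨t, ht, hle, rfl⟩ := hstep
      rcases Multiset.mem_add.mp hq with h | h
      · exact ih q (Multiset.mem_of_le (tsub_le_self) h)
      · exact Finset.mem_union_right _ (Finset.mem_biUnion.mpr ⟨t, ht, Multiset.mem_toFinset.mpr h⟩)
  have hbound : ∀ E, P.Reach IC0 E → E ≤ m := by
    intro E hE
    have hcard : Multiset.card E = n := card_reach P hE
    rw [Multiset.le_iff_count]
    intro q
    by_cases hq : q ∈ E
    · have h1 : Multiset.count q E ≤ n := hcard ▸ Multiset.count_le_card q E
      have h2 : q ∈ S := hsupp E hE q hq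
      have h3 : Multiset.count q S.val = 1 :=
        Multiset.count_eq_one_of_mem S.nodup (Finset.mem_def.mp h2)
      have h4 : Multiset.count q m = n * Multiset.count q S.val := by
        rw [hm, Multiset.count_nsmul]
      rw [h4, h3, mul_one]
      exact h1
    · simp [Multiset.count_eq_zero_of_notMem hq]
  set 𝒮 : Finset (Multiset Q) := (Multiset.powerset m).toFinset with h𝒮
  have hmem𝒮 : ∀ E : Multiset Q, E ∈ 𝒮 ↔ E ≤ m := fun E => by
    rw [h𝒮, Multiset.mem_toFinset, Multiset.mem_powerset]
  set RS : Multiset Q → Finset (Multiset Q) := fun E => 𝒮.filter (fun F => P.Reach E F) with hRS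
  have hmemRS : ∀ E F : Multiset Q, F ∈ RS E ↔ (F ≤ m ∧ P.Reach E F) := by
    intro E F
    rw [hRS]
    simp only [Finset.mem_filter]
    rw [hmem𝒮]
  have hDm : D ∈ RS D := (hmemRS D D).mpr ⟨hbound D hD, Relation.ReflTransGen.refl⟩
  obtain ⟨C, hCmem, hCmin⟩ := Finset.exists_min_image (RS D) (fun E => (RS E).card) ⟨D, hDm⟩
  have hDC : P.Reach D C := ((hmemRS D C).mp hCmem).2
  have hICC : P.Reach IC0 C := hD.trans hDC
  have hbot : ∀ E, P.Reach C E → P.Reach E C := by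
    intro E hCE
    have hICE : P.Reach IC0 E := hICC.trans hCE
    have hEmem : E ∈ RS D := (hmemRS D E).mpr ⟨hbound E hICE, hDC.trans hCE⟩
    have hsub : RS E ⊆ RS C := by
      intro F hF
      obtain ⟨hF1, hF2⟩ := (hmemRS E F).mp hF
      exact (hmemRS C F).mpr ⟨hF1, hCE.trans hF2⟩
    have heq : RS E = RS C := Finset.eq_of_subset_of_card_le hsub (hCmin E hEmem)
    have hCC : C ∈ RS C := (hmemRS C C).mpr ⟨hbound C hICC, Relation.ReflTransGen.refl⟩
    have : C ∈ RS E := by rw [heq]; exact hCC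
    exact ((hmemRS E C).mp this).2
  -- build the cycle
  have hcardC : Multiset.card C = n := card_reach P hICC
  obtain ⟨C'', hstepC⟩ := exists_step P (by rw [hcardC]; exact hn2)
  obtain ⟨l4, hl4⟩ := exists_chainTo (hbot C'' (Relation.ReflTransGen.single hstepC))
  have hloop : ChainTo P.Step C (C'' :: l4) C :=
    ⟨List.chain_cons.mpr ⟨hstepC, hl4.1⟩, by rw [List.getLast_cons_cons]; exact hl4.2⟩
  obtain ⟨lv, hlv, hlvmem⟩ := visit_chain P C (RS C).toList (by
    intro E hE
    have := ((hmemRS C E).mp (Finset.mem_toList.mp hE)).2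
    exact ⟨this, hbot E this⟩)
  set Cy : List (Multiset Q) := lv ++ (C'' :: l4) with hCy
  have hCyne : Cy ≠ [] := by simp [hCy]
  have hCyChain : ChainTo P.Step C Cy C := chainTo_trans hlv hloop
  have hCymem : ∀ E, P.Reach C E → E ∈ Cy := by
    intro E hE
    have hER : E ∈ RS C := (hmemRS C E).mpr ⟨hbound E (hICC.trans hE), hE⟩
    have hE' : E ∈ (C :: lv) := hlvmem E (Finset.mem_toList.mpr hER)
    rcases List.mem_cons.mp hE' with rfl | h
    · have : E ∈ C'' :: l4 := hl4.2 ▸ List.getLast_mem _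
      exact List.mem_append_right _ this
    · exact List.mem_append_left _ h
  have hCyreach : ∀ E ∈ Cy, P.Reach C E := chain_reach P hCyChain.1
  -- build the execution
  obtain ⟨l0, hl0⟩ := exists_chainTo hICC
  set A : List (Multiset Q) := IC0 :: (l0 ++ Cy) with hA
  set pl : ℕ := l0.length + 1 with hpl
  set cl : ℕ := Cy.length with hcl
  have hclpos : 0 < cl := by rw [hcl]; exact List.length_pos_iff.mpr hCyne
  have hAlen : A.length = pl + cl := by
    rw [hA, hpl, hcl]; simp; omega
  have hA' : A.Chain' P.Step := (chainTo_trans hl0 hCyChain).1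
  set σ : ℕ → Multiset Q :=
    fun k => A.getD (if k < pl then k else pl + (k - pl) % cl) IC0 with hσ
  have hAstep : ∀ j, j + 1 < A.length → P.Step (A.getD j IC0) (A.getD (j+1) IC0) := by
    intro j h
    rw [List.getD_eq_getElem _ _ (by omega), List.getD_eq_getElem _ _ h]
    have := List.isChain_iff_getElem.mp hA' j (by omega)
    simpa using this
  have hgetCy : ∀ j (hj : j < cl), A.getD (pl + j) IC0 = Cy.get ⟨j, hj⟩ := by
    intro j hj
    have e : pl + j = (l0.length + j) + 1 := by rw [hpl]; omega
    rw [hA, e, List.getD_cons_succ, List.getD_append_right _ _ _ _ (by omega),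
      Nat.add_sub_cancel_left, List.getD_eq_getElem _ _ (by rw [← hcl]; exact hj),
      List.get_eq_getElem]
  have hCyLast : Cy.getLast hCyne = C := by
    have := hCyChain.2
    rwa [List.getLast_cons hCyne] at this
  have hCyHeadStep : P.Step C (Cy.get ⟨0, hclpos⟩) :=
    by have := List.isChain_iff_getElem.mp hCyChain.1 0 (by simp only [List.length_cons]; omega); simpa using this
  have hwrap : P.Step (A.getD (pl + (cl - 1)) IC0) (A.getD (pl + 0) IC0) := by
    rw [hgetCy (cl-1) (by omega), hgetCy 0 hclpos]
    have : Cy.get ⟨cl - 1, by omega⟩ = Cy.getLast hCyne := by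
      rw [List.getLast_eq_getElem, List.get_eq_getElem]
    rw [this, hCyLast]
    exact hCyHeadStep
  have h0 : σ 0 = IC0 := by
    rw [hσ]
    simp only [if_pos (show 0 < pl by omega)]
    rw [hA]
    rfl
  have hexec : P.IsExecution σ := by
    intro k
    rw [hσ]
    simp only []
    by_cases h1 : k + 1 < pl
    · rw [if_pos (by omega), if_pos h1]
      exact hAstep k (by omega)
    · by_cases h2 : k + 1 = pl
      · rw [if_pos (by omega), if_neg (by omega)]
        have e1 : k + 1 - pl = 0 := by omega
        rw [e1, Nat.zero_mod, Nat.add_zero, ← h2]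
        exact hAstep k (by omega)
      · have hk : pl ≤ k := by omega
        rw [if_neg (by omega), if_neg (by omega)]
        have key : (k + 1 - pl) % cl = ((k - pl) % cl + 1) % cl := by
          rw [Nat.mod_add_mod]
          congr 1
          omega
        have hr : (k - pl) % cl < cl := Nat.mod_lt _ hclpos
        by_cases h3 : (k - pl) % cl + 1 < cl
        · rw [key, Nat.mod_eq_of_lt h3, ← Nat.add_assoc]
          exact hAstep (pl + (k - pl) % cl) (by omega)
        · have h4 : (k - pl) % cl + 1 = cl := by omega
          have h5 : (k + 1 - pl) % cl = 0 := by rw [key, h4, Nat.mod_self]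
          rw [h5]
          have h6 : (k - pl) % cl = cl - 1 := by omega
          rw [h6]
          exact hwrap
  have hσCy : ∀ k, pl ≤ k → ∃ (j : ℕ) (hj : j < cl), σ k = Cy.get ⟨j, hj⟩ := by
    intro k hk
    refine ⟨(k - pl) % cl, Nat.mod_lt _ hclpos, ?_⟩
    rw [hσ]
    simp only [if_neg (show ¬ k < pl by omega)]
    exact hgetCy _ _
  have hCyget : ∀ (j : ℕ) (hj : j < cl) (N : ℕ), ∃ k, N ≤ k ∧ σ k = Cy.get ⟨j, hj⟩ := by
    intro j hj N
    refine ⟨pl + j + N * cl, ?_, ?_⟩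
    · have : N ≤ N * cl := Nat.le_mul_of_pos_right N hclpos
      omega
    · rw [hσ]
      simp only [if_neg (show ¬ pl + j + N * cl < pl by omega)]
      have e1 : pl + j + N * cl - pl = j + N * cl := by omega
      rw [e1, Nat.add_mul_mod_self_right, Nat.mod_eq_of_lt hj]
      exact hgetCy j hj
  have hfair : P.Fair σ := by
    intro E hE N
    obtain ⟨k, hk, hreach⟩ := hE pl
    obtain ⟨j, hj, hσk⟩ := hσCy k hk
    rw [hσk] at hreach
    have hCE : P.Reach C E := (hCyreach _ (Cy.get_mem _)).trans hreach
    obtain ⟨⟨j', hj'⟩, hget⟩ := List.mem_iff_get.mp (hCymem E hCE)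
    obtain ⟨k', hk', hσ'⟩ := hCyget j' hj' N
    exact ⟨k', hk', by rw [hσ', hget]⟩
  have hsum : 2 ≤ ∑ _x : Unit, i₀ := by
    rw [Fintype.sum_unique]; omega
  obtain ⟨N, hN⟩ := hcomp (fun _ => i₀) hsum σ hexec hfair h0
  have hconf : PopulationProtocol.IsConfig C := by
    show 2 ≤ Multiset.card C
    rw [hcardC]; exact hn2
  have hstab : ∀ C', P.Reach C C' → P.Output C' (decide (η ≤ i₀)) := by
    intro C' hC'
    obtain ⟨⟨j, hj⟩, hget⟩ := List.mem_iff_get.mp (hCymem C' hC')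
    obtain ⟨k, hk, hσk⟩ := hCyget j hj N
    have := hN k hk
    rwa [hσk, hget] at this
  have hstable : P.Stable (decide (η ≤ i₀)) C := ⟨hconf, hstab⟩
  refine ⟨C, hDC, ?_⟩
  cases hb : decide (η ≤ i₀) with
  | false => exact Or.inl (hb ▸ hstable)
  | true => exact Or.inr (hb ▸ hstable)

end PPAux
namespace PPAux

/-- The recursively chosen sequence of stable configurations. -/
noncomputable def seqAux {Q : Type} [DecidableEq Q] (P : PopulationProtocol Q Unit)
    (F : ℕ → Multiset Q → Multiset Q) : ℕ → Multiset Q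
  | 0 => P.IC fun _ => 0
  | 1 => P.IC fun _ => 0
  | 2 => F 2 (P.IC fun _ => 2)
  | (k + 3) => F (k + 3) (seqAux P F (k + 2) + Multiset.replicate 1 (P.I ()))

end PPAux

theorem stable_sequence {Q : Type} [DecidableEq Q] (P : PopulationProtocol Q Unit)
    (η : ℕ) (hη : 2 ≤ η) (hcomp : P.Computes fun v => decide (η ≤ v ())) :
    ∃ C : ℕ → Multiset Q,
      (∀ i, 2 ≤ i → P.StableSet (C i)) ∧
      (∀ i, 2 ≤ i → P.Reach (P.IC fun _ => i) (C i)) ∧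
      (∀ i, 2 ≤ i → ∀ j : ℕ, P.Reach (C i + Multiset.replicate j (P.I ())) (C (i + j))) := by
  classical
  have key' : ∀ (i : ℕ) (D : Multiset Q), ∃ C : Multiset Q,
      (2 ≤ i → P.Reach (P.IC fun _ => i) D → P.Reach D C ∧ P.StableSet C) := by
    intro i D
    by_cases h : 2 ≤ i ∧ P.Reach (P.IC fun _ => i) D
    · obtain ⟨C, h1, h2⟩ := PPAux.reach_stable P η hcomp i h.1 D h.2
      exact ⟨C, fun _ _ => ⟨h1, h2⟩⟩
    · exact ⟨0, fun h1 h2 => absurd ⟨h1, h2⟩ h⟩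
  choose F hF using key'
  have heq2 : PPAux.seqAux P F 2 = F 2 (P.IC fun _ => 2) := rfl
  have heqsucc : ∀ k, 2 ≤ k →
      PPAux.seqAux P F (k + 1) = F (k + 1) (PPAux.seqAux P F k + Multiset.replicate 1 (P.I ())) := by
    intro k hk
    obtain ⟨j, rfl⟩ : ∃ j, k = j + 2 := ⟨k - 2, by omega⟩
    rfl
  have hInv : ∀ i, 2 ≤ i →
      P.Reach (P.IC fun _ => i) (PPAux.seqAux P F i) ∧ P.StableSet (PPAux.seqAux P F i) := by
    intro i hi
    induction i with
    | zero => omega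
    | succ k ih =>
      rcases Nat.lt_or_ge k 2 with hk | hk
      · have hk1 : k = 1 := by omega
        subst hk1
        have h := hF 2 (P.IC fun _ => 2) (by norm_num) Relation.ReflTransGen.refl
        rw [show (1 + 1 : ℕ) = 2 from rfl, heq2]
        exact ⟨h.1, h.2⟩
      · obtain ⟨ih1, ih2⟩ := ih hk
        have hr : P.Reach (P.IC fun _ => (k + 1))
            (PPAux.seqAux P F k + Multiset.replicate 1 (P.I ())) := by
          rw [PPAux.IC_succ]
          exact PPAux.reach_mono P _ ih1
        have h := hF (k + 1) _ (by omega) hr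
        rw [heqsucc k hk]
        exact ⟨hr.trans h.1, h.2⟩
  have hstep1 : ∀ i, 2 ≤ i →
      P.Reach (PPAux.seqAux P F i + Multiset.replicate 1 (P.I ())) (PPAux.seqAux P F (i + 1)) := by
    intro i hi
    have hr : P.Reach (P.IC fun _ => (i + 1))
        (PPAux.seqAux P F i + Multiset.replicate 1 (P.I ())) := by
      rw [PPAux.IC_succ]
      exact PPAux.reach_mono P _ (hInv i hi).1
    have h := hF (i + 1) _ (by omega) hr
    rw [heqsucc i hi]
    exact h.1
  refine ⟨PPAux.seqAux P F, fun i hi => (hInv i hi).2, fun i hi => (hInv i hi).1, ?_⟩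
  intro i hi j
  induction j with
  | zero =>
    simp only [Multiset.replicate_zero, add_zero]
    exact Relation.ReflTransGen.refl
  | succ j ihj =>
    have e : PPAux.seqAux P F i + Multiset.replicate (j + 1) (P.I ())
        = (PPAux.seqAux P F i + Multiset.replicate j (P.I ())) + Multiset.replicate 1 (P.I ()) := by
      rw [add_assoc, ← Multiset.replicate_add]
    rw [e, show i + (j + 1) = (i + j) + 1 from by omega]
    exact (PPAux.reach_mono P _ ihj).trans (hstep1 (i + j) (by omega))
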